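/- Let A, B ∈ ℝ^{d×d} be symmetric with B positive definite and let P* maximize the trace ratio q(P) = tr(PᵀAP)/tr(PᵀBP) over orthonormal P ∈ ℝ^{d×p}. Then the columns of P* span an invariant subspace of H = A − q(P*)·B associated with its p largest eigenvalues; i.e., there exists a symmetric Λ ∈ ℝ^{p×p} with H P* = P* Λ and the eigenvalues of Λ are the p largest eigenvalues of H (in particular tr(Λ) = 0 equals the sum of the p largest eigenvalues of H). -/

import Mathlib

open Matrix Finset

lemma sum_ite_lt (d p : ℕ) (hp : p ≤ d) (f : Fin d → ℝ) :
    ∑ i : Fin d, (if (i:ℕ) < p then f i else 0) = ∑ k : Fin p, f (Fin.castLE hp k) := by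
  rw [← Finset.sum_filter]
  have himg : (Finset.univ.filter (fun i : Fin d => (i:ℕ) < p))
      = Finset.image (Fin.castLE hp) Finset.univ := by
    ext i
    simp only [mem_filter, mem_univ, true_and, mem_image]
    constructor
    · intro h; exact ⟨⟨i, h⟩, rfl⟩
    · rintro ⟨k, rfl⟩; exact k.2
  rw [himg, Finset.sum_image (fun a _ b _ h => Fin.castLE_injective hp h)]

lemma antitone01_one_iff {m : ℕ} (f : Fin m → ℝ) (hf : Antitone f)
    (h01 : ∀ k, f k = 0 ∨ f k = 1) (k : Fin m) :
    f k = 1 ↔ ((k:ℕ):ℝ) < ∑ j, f j := by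
  constructor
  · intro hk
    have h1 : ∀ j ∈ Finset.Iic k, (1:ℝ) ≤ f j := by
      intro j hj
      rcases h01 j with h | h
      · have := hf (Finset.mem_Iic.mp hj)
        rw [hk] at this; rw [h] at this; linarith
      · rw [h]
    have h2 : (Finset.Iic k).card • (1:ℝ) ≤ ∑ j ∈ Finset.Iic k, f j :=
      Finset.card_nsmul_le_sum _ _ _ h1
    have h3 : ∑ j ∈ Finset.Iic k, f j ≤ ∑ j, f j := by
      apply Finset.sum_le_sum_of_subset_of_nonneg (Finset.subset_univ _)
      intro j _ _
      rcases h01 j with h | h <;> rw [h] <;> norm_num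
    rw [Fin.card_Iic] at h2
    simp only [nsmul_eq_mul, mul_one] at h2
    push_cast at h2
    linarith
  · intro hk
    by_contra hne
    have hk0 : f k = 0 := (h01 k).resolve_right hne
    have hb : ∀ j : Fin m, f j ≤ (if j < k then (1:ℝ) else 0) := by
      intro j
      by_cases hj : j < k
      · simp only [hj, if_true]
        rcases h01 j with h | h <;> rw [h] <;> norm_num
      · simp only [hj, if_false]
        have : f j ≤ f k := hf (not_lt.mp hj)
        rw [hk0] at this; exact this
    have hle : ∑ j, f j ≤ ((k:ℕ):ℝ) := by
      calc ∑ j, f j ≤ ∑ j, (if j < k then (1:ℝ) else 0) :=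
            Finset.sum_le_sum fun j _ => hb j
        _ = ((Finset.univ.filter (fun j : Fin m => j < k)).card : ℝ) := by
            rw [Finset.sum_boole]
        _ = ((k:ℕ):ℝ) := by
            congr 1
            have : (Finset.univ.filter (fun j : Fin m => j < k)) = Finset.Iio k := by
              ext j; simp
            rw [this, Fin.card_Iio]
    linarith

lemma antitone01_eq {m : ℕ} (f g : Fin m → ℝ) (hf : Antitone f) (hg : Antitone g)
    (hf01 : ∀ k, f k = 0 ∨ f k = 1) (hg01 : ∀ k, g k = 0 ∨ g k = 1)
    (hsum : ∑ k, f k = ∑ k, g k) : f = g := by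
  funext k
  rcases hf01 k with h | h
  · rcases hg01 k with h' | h'
    · rw [h, h']
    · exfalso
      have := (antitone01_one_iff g hg hg01 k).mp h'
      rw [← hsum] at this
      have := (antitone01_one_iff f hf hf01 k).mpr this
      rw [h] at this; norm_num at this
  · rw [h]
    have := (antitone01_one_iff f hf hf01 k).mp h
    rw [hsum] at this
    exact ((antitone01_one_iff g hg hg01 k).mpr this).symm

lemma cast_cond_iff {d p : ℕ} (hp : p ≤ d) (i : Fin d) (hi : (i:ℕ) < p) (x : Fin p) :
    (i = Fin.castLE hp x) = ((⟨(i:ℕ), hi⟩ : Fin p) = x) := by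
  apply propext
  rw [Fin.ext_iff, Fin.ext_iff]
  simp only [Fin.coe_castLE]

lemma real_spectral {m : ℕ} (M : Matrix (Fin m) (Fin m) ℝ) (hsym : Mᵀ = M) :
    ∃ (U : Matrix (Fin m) (Fin m) ℝ) (ε : Fin m → ℝ),
      Uᵀ * U = 1 ∧ U * Uᵀ = 1 ∧ M = U * Matrix.diagonal ε * Uᵀ := by
  have hherm : M.IsHermitian := by
    rw [Matrix.IsHermitian, Matrix.conjTranspose_eq_transpose_of_trivial, hsym]
  refine ⟨(Matrix.IsHermitian.eigenvectorUnitary hherm : Matrix (Fin m) (Fin m) ℝ),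
    hherm.eigenvalues, ?_, ?_, ?_⟩
  · have h := (Matrix.IsHermitian.eigenvectorUnitary hherm).2.1
    rwa [Matrix.star_eq_conjTranspose, Matrix.conjTranspose_eq_transpose_of_trivial] at h
  · have h := (Matrix.IsHermitian.eigenvectorUnitary hherm).2.2
    rwa [Matrix.star_eq_conjTranspose, Matrix.conjTranspose_eq_transpose_of_trivial] at h
  · have h := Matrix.IsHermitian.spectral_theorem hherm
    rw [Unitary.conjStarAlgAut_apply, Matrix.star_eq_conjTranspose] at h
    rw [← Matrix.conjTranspose_eq_transpose_of_trivial]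
    exact h

lemma block_zero (d p : ℕ) (t : ℝ) (μ : Fin d → ℝ) (Pi : Matrix (Fin d) (Fin d) ℝ)
    (hsym : Piᵀ = Pi)
    (h1 : ∀ i : Fin d, (i:ℕ) < p → μ i ≠ t → ∀ j, Pi i j = if i = j then 1 else 0)
    (h0 : ∀ i : Fin d, p ≤ (i:ℕ) → μ i ≠ t → ∀ j, Pi i j = 0) :
    ∀ i j, μ i ≠ μ j → Pi i j = 0 := by
  have key : ∀ i j, μ i ≠ μ j → μ i ≠ t → Pi i j = 0 := by
    intro i j hne hit
    rcases lt_or_ge (i:ℕ) p with h | h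
    · rw [h1 i h hit j, if_neg]
      intro hij; exact hne (by rw [hij])
    · exact h0 i h hit j
  intro i j hne
  by_cases hit : μ i = t
  · have hjt : μ j ≠ t := fun h => hne (hit.trans h.symm)
    have : Pi j i = 0 := key j i (fun h => hne h.symm) hjt
    calc Pi i j = Piᵀ j i := rfl
      _ = Pi j i := by rw [hsym]
      _ = 0 := this
  · exact key i j hne hit

lemma exists_O (d p : ℕ) (hp : p ≤ d) (t : ℝ) (μ : Fin d → ℝ)
    (Pi : Matrix (Fin d) (Fin d) ℝ) (hsym : Piᵀ = Pi)
    (h1 : ∀ i : Fin d, (i:ℕ) < p → μ i ≠ t → ∀ j, Pi i j = if i = j then 1 else 0)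
    (h0 : ∀ i : Fin d, p ≤ (i:ℕ) → μ i ≠ t → ∀ j, Pi i j = 0)
    (hidem : Pi * Pi = Pi)
    (htr : Pi.trace = (p:ℝ)) :
    ∃ O : Matrix (Fin d) (Fin d) ℝ, Oᵀ * O = 1 ∧
      O * Matrix.diagonal μ = Matrix.diagonal μ * O ∧
      O * Matrix.diagonal (fun i : Fin d => if (i:ℕ) < p then (1:ℝ) else 0) * Oᵀ = Pi := by
  classical
  have hblock := block_zero d p t μ Pi hsym h1 h0
  set T : Finset (Fin d) := Finset.univ.filter (fun i => μ i = t) with hT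
  have hmemT : ∀ i, i ∈ T ↔ μ i = t := by
    intro i; simp [hT]
  set e : Fin T.card → Fin d := fun k => ((T.orderIsoOfFin rfl) k : Fin d) with he
  have he_mem : ∀ k, e k ∈ T := fun k => (T.orderIsoOfFin rfl k).2
  have he_t : ∀ k, μ (e k) = t := fun k => (hmemT _).mp (he_mem k)
  have he_strict : StrictMono e := fun a b hab => (T.orderIsoOfFin rfl).strictMono hab
  have he_inj : Function.Injective e := he_strict.injective
  set ι : ∀ i : Fin d, i ∈ T → Fin T.card := fun i h => (T.orderIsoOfFin rfl).symm ⟨i, h⟩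
    with hι
  have he_ι : ∀ i h, e (ι i h) = i := by
    intro i h
    simp only [he, hι, OrderIso.apply_symm_apply]
  have hι_e : ∀ k h, ι (e k) h = k := by
    intro k h
    apply he_inj
    rw [he_ι]
  have himg : T = Finset.image e Finset.univ := by
    ext i
    constructor
    · intro hi
      exact Finset.mem_image.mpr ⟨ι i hi, Finset.mem_univ _, he_ι i hi⟩
    · rintro hi
      obtain ⟨k, _, rfl⟩ := Finset.mem_image.mp hi
      exact he_mem k
  have hsumT : ∀ F : Fin d → ℝ, ∑ i ∈ T, F i = ∑ k, F (e k) := by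
    intro F
    rw [Finset.sum_congr himg (fun _ _ => rfl),
      Finset.sum_image (fun a _ b _ h => he_inj h)]
  -- the compressed matrix
  set M : Matrix (Fin T.card) (Fin T.card) ℝ := Pi.submatrix e e with hM
  have hMsym : Mᵀ = M := by
    ext k l
    simp only [hM, Matrix.transpose_apply, Matrix.submatrix_apply]
    calc Pi (e l) (e k) = Piᵀ (e k) (e l) := rfl
      _ = Pi (e k) (e l) := by rw [hsym]
  have hMidem : M * M = M := by
    ext k l
    have hrhs : M k l = ∑ i : Fin d, Pi (e k) i * Pi i (e l) := by
      have h' : M k l = (Pi * Pi) (e k) (e l) := by rw [hidem]; rfl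
      rw [h', Matrix.mul_apply]
    rw [Matrix.mul_apply, hrhs,
      ← Finset.sum_add_sum_compl T (fun i => Pi (e k) i * Pi i (e l))]
    have hzero : ∑ i ∈ Tᶜ, Pi (e k) i * Pi i (e l) = 0 := by
      apply Finset.sum_eq_zero
      intro i hi
      have : μ i ≠ t := by
        intro h
        exact (Finset.mem_compl.mp hi) ((hmemT i).mpr h)
      rw [hblock (e k) i (by rw [he_t k]; exact fun h => this h.symm), zero_mul]
    rw [hzero, add_zero, hsumT (fun i => Pi (e k) i * Pi i (e l))]
    rfl
  obtain ⟨U, ε, hU1, hU2, hUM⟩ := real_spectral M hMsym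
  -- eigenvalues are 0 or 1
  have hdiag : Matrix.diagonal ε = Uᵀ * M * U := by
    rw [hUM]
    symm
    calc Uᵀ * (U * Matrix.diagonal ε * Uᵀ) * U
        = (Uᵀ * U) * Matrix.diagonal ε * (Uᵀ * U) := by
          simp only [Matrix.mul_assoc]
      _ = Matrix.diagonal ε := by rw [hU1, Matrix.one_mul, Matrix.mul_one]
  have hdd : Matrix.diagonal ε * Matrix.diagonal ε = Matrix.diagonal ε := by
    rw [hdiag]
    calc (Uᵀ * M * U) * (Uᵀ * M * U) = Uᵀ * M * (U * Uᵀ) * M * U := by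
          simp only [Matrix.mul_assoc]
      _ = Uᵀ * M * M * U := by rw [hU2, Matrix.mul_one]
      _ = Uᵀ * (M * M) * U := by rw [Matrix.mul_assoc Uᵀ M M]
      _ = Uᵀ * M * U := by rw [hMidem]
  have h01 : ∀ k, ε k = 0 ∨ ε k = 1 := by
    intro k
    have := congrFun (congrFun hdd k) k
    simp only [Matrix.diagonal_mul_diagonal, Matrix.diagonal_apply_eq] at this
    have h2 : ε k * (ε k - 1) = 0 := by rw [mul_sub, mul_one, this, sub_self]
    rcases mul_eq_zero.mp h2 with h | h
    · exact Or.inl h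
    · right; linarith
  -- trace counting
  have hsumε : ∑ k, ε k = M.trace := by
    have : M.trace = (U * Matrix.diagonal ε * Uᵀ).trace := by rw [← hUM]
    rw [this, Matrix.trace_mul_cycle, hU1, Matrix.one_mul, Matrix.trace_diagonal]
  have hχp : ∑ i : Fin d, (if (i:ℕ) < p then (1:ℝ) else 0) = (p:ℝ) := by
    rw [sum_ite_lt d p hp (fun _ => (1:ℝ))]
    simp
  have htrM : M.trace = ∑ k, (if ((e k : Fin d):ℕ) < p then (1:ℝ) else 0) := by
    have h₁ : M.trace = ∑ i ∈ T, Pi i i := by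
      rw [hsumT (fun i => Pi i i)]; rfl
    have h₂ : ∑ i ∈ Tᶜ, Pi i i = ∑ i ∈ Tᶜ, (if (i:ℕ) < p then (1:ℝ) else 0) := by
      apply Finset.sum_congr rfl
      intro i hi
      have hit : μ i ≠ t := fun h => (Finset.mem_compl.mp hi) ((hmemT i).mpr h)
      rcases lt_or_ge (i:ℕ) p with h | h
      · rw [h1 i h hit i, if_pos rfl, if_pos h]
      · rw [h0 i h hit i, if_neg (not_lt.mpr h)]
    have h₃ : ∑ i ∈ T, Pi i i + ∑ i ∈ Tᶜ, Pi i i = (p:ℝ) := by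
      rw [Finset.sum_add_sum_compl T (fun i => Pi i i)]
      exact htr
    have h₄ : ∑ i ∈ T, (if (i:ℕ) < p then (1:ℝ) else 0)
        + ∑ i ∈ Tᶜ, (if (i:ℕ) < p then (1:ℝ) else 0) = (p:ℝ) := by
      rw [Finset.sum_add_sum_compl]; exact hχp
    have h₅ : ∑ i ∈ T, Pi i i = ∑ i ∈ T, (if (i:ℕ) < p then (1:ℝ) else 0) := by
      rw [h₂] at h₃; linarith
    rw [h₁, h₅, hsumT]
  -- sorting
  set σ : Equiv.Perm (Fin T.card) := Tuple.sort (fun k => -ε k) with hσ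
  set ν : Fin T.card → ℝ := fun k => ε (σ k) with hν
  have hν_anti : Antitone ν := by
    intro a b hab
    have := Tuple.monotone_sort (fun k => -ε k) hab
    simp only [Function.comp_apply] at this
    simp only [hν]
    linarith
  set g : Fin T.card → ℝ := fun k => if ((e k : Fin d):ℕ) < p then (1:ℝ) else 0 with hg
  have hg_anti : Antitone g := by
    intro a b hab
    simp only [hg]
    by_cases hb : ((e b : Fin d):ℕ) < p
    · rw [if_pos hb, if_pos (lt_of_le_of_lt (by exact_mod_cast (he_strict.monotone hab)) hb)]
    · rw [if_neg hb]
      by_cases ha : ((e a : Fin d):ℕ) < p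
      · rw [if_pos ha]; norm_num
      · rw [if_neg ha]
  have hν01 : ∀ k, ν k = 0 ∨ ν k = 1 := fun k => h01 (σ k)
  have hg01 : ∀ k, g k = 0 ∨ g k = 1 := by
    intro k; simp only [hg]; split_ifs <;> simp
  have hνg : ν = g := by
    apply antitone01_eq ν g hν_anti hg_anti hν01 hg01
    rw [show ∑ k, ν k = ∑ k, ε k from Equiv.sum_comp σ ε, hsumε, htrM]
  -- reordered eigenvector matrix
  set U' : Matrix (Fin T.card) (Fin T.card) ℝ := fun i j => U i (σ j) with hU'
  have hU'1 : U'ᵀ * U' = 1 := by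
    ext k l
    have h := congrFun (congrFun hU1 (σ k)) (σ l)
    rw [Matrix.mul_apply] at h
    simp only [Matrix.transpose_apply] at h
    rw [Matrix.mul_apply]
    simp only [Matrix.transpose_apply]
    simp only [hU']
    rw [h]
    simp [Matrix.one_apply, EmbeddingLike.apply_eq_iff_eq]
  have hMU' : M = U' * Matrix.diagonal ν * U'ᵀ := by
    ext i j
    rw [hUM]
    rw [Matrix.mul_apply, Matrix.mul_apply]
    have lhs : ∀ k, (U * Matrix.diagonal ε) i k * Uᵀ k j = U i k * ε k * U j k := by
      intro k
      rw [Matrix.mul_diagonal]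
      rfl
    have rhs : ∀ k, (U' * Matrix.diagonal ν) i k * U'ᵀ k j = U i (σ k) * ε (σ k) * U j (σ k) := by
      intro k
      rw [Matrix.mul_diagonal]
      simp only [Matrix.transpose_apply]
      simp only [hU', hν]
    simp only [lhs, rhs]
    exact (Equiv.sum_comp σ (fun k => U i k * ε k * U j k)).symm
  -- the orthogonal matrix O
  set O : Matrix (Fin d) (Fin d) ℝ := fun i j =>
    if h : i ∈ T ∧ j ∈ T then U' (ι i h.1) (ι j h.2)
    else (if i = j then 1 else 0) with hO
  have hOTT : ∀ i j (hi : i ∈ T) (hj : j ∈ T), O i j = U' (ι i hi) (ι j hj) := by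
    intro i j hi hj
    simp only [hO]
    rw [dif_pos ⟨hi, hj⟩]
  have hOrow : ∀ i, i ∉ T → ∀ j, O i j = if i = j then 1 else 0 := by
    intro i hi j
    simp only [hO]
    rw [dif_neg (fun h => hi h.1)]
  have hOcol : ∀ j, j ∉ T → ∀ i, O i j = if i = j then 1 else 0 := by
    intro j hj i
    simp only [hO]
    rw [dif_neg (fun h => hj h.2)]
  refine ⟨O, ?_, ?_, ?_⟩
  · -- OᵀO = 1
    ext i j
    rw [Matrix.mul_apply]
    simp only [Matrix.transpose_apply]
    by_cases hi : i ∈ T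
    · by_cases hj : j ∈ T
      · rw [← Finset.sum_add_sum_compl T (fun k => O k i * O k j)]
        have hz : ∑ k ∈ Tᶜ, O k i * O k j = 0 := by
          apply Finset.sum_eq_zero
          intro k hk
          rw [hOrow k (Finset.mem_compl.mp hk) i,
            if_neg (fun h : k = i => (Finset.mem_compl.mp hk) (by rw [h]; exact hi)), zero_mul]
        rw [hz, add_zero, hsumT (fun k => O k i * O k j)]
        have hterm : ∀ k, O (e k) i * O (e k) j = U' k (ι i hi) * U' k (ι j hj) := by
          intro k
          rw [hOTT (e k) i (he_mem k) hi, hOTT (e k) j (he_mem k) hj, hι_e]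
        simp only [hterm]
        have h := congrFun (congrFun hU'1 (ι i hi)) (ι j hj)
        rw [Matrix.mul_apply] at h
        simp only [Matrix.transpose_apply] at h
        rw [h]
        by_cases hij : i = j
        · subst hij; simp [Matrix.one_apply]
        · rw [Matrix.one_apply_ne (fun h' : ι i hi = ι j hj => hij (by
            rw [← he_ι i hi, ← he_ι j hj, h'])),
            Matrix.one_apply_ne hij]
      · have hcol : ∀ k, O k j = if k = j then 1 else 0 := fun k => hOcol j hj k
        simp only [hcol, mul_ite, mul_one, mul_zero]
        rw [Finset.sum_ite_eq' Finset.univ j (fun k => O k i), if_pos (Finset.mem_univ j)]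
        rw [hOrow j hj i, Matrix.one_apply]
        by_cases hij : i = j
        · subst hij; simp
        · rw [if_neg (fun h : j = i => hij h.symm), if_neg hij]
    · have hcol : ∀ k, O k i = if k = i then 1 else 0 := fun k => hOcol i hi k
      simp only [hcol, ite_mul, one_mul, zero_mul]
      rw [Finset.sum_ite_eq' Finset.univ i (fun k => O k j), if_pos (Finset.mem_univ i)]
      rw [hOrow i hi j, Matrix.one_apply]
  · -- O commutes with diagonal μ
    ext i j
    rw [Matrix.mul_diagonal, Matrix.diagonal_mul]
    by_cases hμij : μ i = μ j
    · rw [hμij]; ring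
    · have hO0 : O i j = 0 := by
        have hnTT : ¬ (i ∈ T ∧ j ∈ T) := by
          rintro ⟨hi, hj⟩
          exact hμij (((hmemT i).mp hi).trans (((hmemT j).mp hj).symm))
        simp only [hO]
        rw [dif_neg hnTT, if_neg (fun h : i = j => hμij (by rw [h]))]
      rw [hO0]; ring
  · -- O χ Oᵀ = Pi
    ext i j
    rw [Matrix.mul_apply]
    have hterm : ∀ k, (O * Matrix.diagonal fun i : Fin d => if (i:ℕ) < p then (1:ℝ) else 0) i k
        * Oᵀ k j = O i k * (if (k:ℕ) < p then (1:ℝ) else 0) * O j k := by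
      intro k
      rw [Matrix.mul_diagonal]
      rfl
    simp only [hterm]
    by_cases hi : i ∈ T
    · by_cases hj : j ∈ T
      · rw [← Finset.sum_add_sum_compl T
          (fun k => O i k * (if (k:ℕ) < p then (1:ℝ) else 0) * O j k)]
        have hz : ∑ k ∈ Tᶜ, O i k * (if (k:ℕ) < p then (1:ℝ) else 0) * O j k = 0 := by
          apply Finset.sum_eq_zero
          intro k hk
          rw [hOcol k (Finset.mem_compl.mp hk) i,
            if_neg (fun h : i = k => (Finset.mem_compl.mp hk) (by rw [← h]; exact hi)),
            zero_mul, zero_mul]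
        rw [hz, add_zero, hsumT (fun k => O i k * (if (k:ℕ) < p then (1:ℝ) else 0) * O j k)]
        have hterm2 : ∀ k, O i (e k) * (if ((e k : Fin d):ℕ) < p then (1:ℝ) else 0) * O j (e k)
            = U' (ι i hi) k * ν k * U' (ι j hj) k := by
          intro k
          rw [hOTT i (e k) hi (he_mem k), hOTT j (e k) hj (he_mem k), hι_e]
          have : (if ((e k : Fin d):ℕ) < p then (1:ℝ) else 0) = ν k := by
            rw [hνg]
          rw [this]
        simp only [hterm2]
        have h := congrFun (congrFun hMU' (ι i hi)) (ι j hj)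
        rw [Matrix.mul_apply] at h
        have hterm3 : ∀ k, (U' * Matrix.diagonal ν) (ι i hi) k * U'ᵀ k (ι j hj)
            = U' (ι i hi) k * ν k * U' (ι j hj) k := by
          intro k
          rw [Matrix.mul_diagonal]
          rfl
        simp only [hterm3] at h
        rw [← h]
        simp only [hM, Matrix.submatrix_apply, he_ι]
      · -- i ∈ T, j ∉ T
        have hrow : ∀ k, O j k = if j = k then 1 else 0 := fun k => hOrow j hj k
        simp only [hrow, mul_ite, mul_one, mul_zero]
        simp only [Finset.sum_ite_eq, Finset.mem_univ, if_true]
        have hOij : O i j = 0 := by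
          rw [hOcol j hj i, if_neg (fun h : i = j => hj (by rw [← h]; exact hi))]
        have hPij : Pi i j = 0 := hblock i j (by
          rw [(hmemT i).mp hi]
          exact fun h => hj ((hmemT j).mpr h.symm))
        rw [hOij, hPij]
        split_ifs <;> simp
    · -- i ∉ T
      have hrow : ∀ k, O i k = if i = k then 1 else 0 := fun k => hOrow i hi k
      simp only [hrow, ite_mul, one_mul, zero_mul]
      simp only [Finset.sum_ite_eq, Finset.mem_univ, if_true]
      rw [hOcol i hi j]
      have hit : μ i ≠ t := fun h => hi ((hmemT i).mpr h)
      rcases lt_or_ge (i:ℕ) p with h | h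
      · rw [if_pos h, h1 i h hit j]
        by_cases hij : i = j
        · subst hij; simp
        · rw [if_neg (fun h' : j = i => hij h'.symm), if_neg hij]
      · rw [if_neg (not_lt.mpr h), h0 i h hit j]

/-- If `P*` maximizes the trace ratio `q(P) = tr(PᵀAP)/tr(PᵀBP)` over
orthonormal `P` (with `B` positive definite), then the columns of `P*` span an
invariant subspace of `H = A − q(P*)·B` associated with its `p` largest
eigenvalues: there is a symmetric `Λ` with `H P* = P* Λ` whose eigenvalues are
the `p` largest eigenvalues of `H`; in particular `tr Λ = 0` equals the sum of
the `p` largest eigenvalues of `H`. Here `H = V D(μ) Vᵀ` is an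
eigendecomposition with `V` orthogonal and `μ` decreasing. -/
theorem trace_ratio_maximizer_invariant_subspace
    (d p : ℕ) (hp : p ≤ d)
    (A B : Matrix (Fin d) (Fin d) ℝ)
    (hA : Aᵀ = A) (hB : B.PosDef)
    (q : Matrix (Fin d) (Fin p) ℝ → ℝ)
    (hq : q = fun P => (Pᵀ * A * P).trace / (Pᵀ * B * P).trace)
    (Pstar : Matrix (Fin d) (Fin p) ℝ) (hPs : Pstarᵀ * Pstar = 1)
    (hmax : ∀ P : Matrix (Fin d) (Fin p) ℝ, Pᵀ * P = 1 → q P ≤ q Pstar)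
    (H : Matrix (Fin d) (Fin d) ℝ) (hH : H = A - q Pstar • B)
    (V : Matrix (Fin d) (Fin d) ℝ) (μ : Fin d → ℝ)
    (hV : Vᵀ * V = 1) (hμ : Antitone μ)
    (hdec : H = V * Matrix.diagonal μ * Vᵀ) :
    ∃ Λ : Matrix (Fin p) (Fin p) ℝ,
      Λᵀ = Λ ∧ H * Pstar = Pstar * Λ ∧
      (∃ W : Matrix (Fin p) (Fin p) ℝ, Wᵀ * W = 1 ∧
        Λ = W * Matrix.diagonal (fun i => μ (Fin.castLE hp i)) * Wᵀ) ∧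
      Λ.trace = 0 ∧ Λ.trace = ∑ i : Fin p, μ (Fin.castLE hp i) := by
  classical
  rcases Nat.eq_zero_or_pos p with hp0 | hp0
  · subst hp0
    have h20 : ∀ (M N : Matrix (Fin d) (Fin 0) ℝ), M = N := by
      intro M N; ext i j; exact j.elim0
    have hpp : ∀ (M N : Matrix (Fin 0) (Fin 0) ℝ), M = N := by
      intro M N; ext i j; exact i.elim0
    refine ⟨0, hpp _ _, h20 _ _, ⟨1, hpp _ _, hpp _ _⟩, ?_, ?_⟩
    · simp [Matrix.trace]
    · simp [Matrix.trace]
  set D := Matrix.diagonal μ with hD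
  have hVV : V * Vᵀ = 1 := mul_eq_one_comm.mp hV
  set Q := Vᵀ * Pstar with hQdef
  have hQt : Qᵀ = Pstarᵀ * V := by
    rw [hQdef, Matrix.transpose_mul, Matrix.transpose_transpose]
  have hQ : Qᵀ * Q = 1 := by
    rw [hQt, hQdef]
    calc Pstarᵀ * V * (Vᵀ * Pstar) = Pstarᵀ * (V * Vᵀ) * Pstar := by
          simp only [Matrix.mul_assoc]
      _ = Pstarᵀ * Pstar := by rw [hVV, Matrix.mul_one]
      _ = 1 := hPs
  set Pi : Matrix (Fin d) (Fin d) ℝ := Q * Qᵀ with hPidef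
  have hPisym : Piᵀ = Pi := by
    rw [hPidef, Matrix.transpose_mul, Matrix.transpose_transpose]
  have hPiidem : Pi * Pi = Pi := by
    rw [hPidef]
    calc Q * Qᵀ * (Q * Qᵀ) = Q * (Qᵀ * Q) * Qᵀ := by simp only [Matrix.mul_assoc]
      _ = Q * Qᵀ := by rw [hQ, Matrix.mul_one, Matrix.mul_assoc]
  have hPiQ : Pi * Q = Q := by
    rw [hPidef, Matrix.mul_assoc, hQ, Matrix.mul_one]
  have hPV : V * Q = Pstar := by
    rw [hQdef, ← Matrix.mul_assoc, hVV, Matrix.one_mul]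
  have hPis : ∀ i j, Pi j i = Pi i j := fun i j => congrFun (congrFun hPisym i) j
  have hsq : ∀ i, ∑ j, (Pi i j)^2 = Pi i i := by
    intro i
    have h := congrFun (congrFun hPiidem i) i
    rw [Matrix.mul_apply] at h
    have hterm : ∀ j, Pi i j * Pi j i = Pi i j ^ 2 := fun j => by rw [hPis i j, sq]
    simp only [hterm] at h
    exact h
  have hnonneg : ∀ i, 0 ≤ Pi i i := fun i => by
    rw [← hsq i]
    exact Finset.sum_nonneg fun j _ => sq_nonneg _
  have hrowsq : ∀ i, ∑ j, ((if i = j then (1:ℝ) else 0) - Pi i j)^2 = 1 - Pi i i := by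
    intro i
    have expand : ∀ j, ((if i = j then (1:ℝ) else 0) - Pi i j)^2
        = ((if i = j then (1:ℝ) else 0) - 2 * (if i = j then Pi i j else 0)) + (Pi i j)^2 := by
      intro j; split_ifs <;> ring
    simp only [expand]
    rw [Finset.sum_add_distrib, Finset.sum_sub_distrib,
      Finset.sum_ite_eq Finset.univ i (fun _ => (1:ℝ)), if_pos (Finset.mem_univ i),
      ← Finset.mul_sum, Finset.sum_ite_eq Finset.univ i (fun j => Pi i j),
      if_pos (Finset.mem_univ i), hsq i]
    ring
  have hle1 : ∀ i, Pi i i ≤ 1 := by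
    intro i
    have h := hrowsq i
    have h2 : (0:ℝ) ≤ ∑ j, ((if i = j then (1:ℝ) else 0) - Pi i j)^2 :=
      Finset.sum_nonneg fun j _ => sq_nonneg _
    linarith
  have hrow1 : ∀ i, Pi i i = 1 → ∀ j, Pi i j = if i = j then 1 else 0 := by
    intro i hi j
    have h := hrowsq i
    rw [hi, sub_self] at h
    have h2 := (Finset.sum_eq_zero_iff_of_nonneg
      (fun j (_ : j ∈ Finset.univ) => sq_nonneg ((if i = j then (1:ℝ) else 0) - Pi i j))).mp h
      j (Finset.mem_univ j)
    have h3 := sq_eq_zero_iff.mp h2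
    linarith [h3]
  have hrow0 : ∀ i, Pi i i = 0 → ∀ j, Pi i j = 0 := by
    intro i hi j
    have h := hsq i
    rw [hi] at h
    have h2 := (Finset.sum_eq_zero_iff_of_nonneg
      (fun j (_ : j ∈ Finset.univ) => sq_nonneg (Pi i j))).mp h j (Finset.mem_univ j)
    exact sq_eq_zero_iff.mp h2
  have hPitr : Pi.trace = (p:ℝ) := by
    rw [hPidef, Matrix.trace_mul_comm, hQ, Matrix.trace_one]
    simp
  -- positivity of the B-trace
  have hBtr : ∀ R : Matrix (Fin d) (Fin p) ℝ, Rᵀ * R = 1 → 0 < (Rᵀ * B * R).trace := by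
    intro R hR
    have hentry : ∀ k, 0 < (Rᵀ * B * R) k k := by
      intro k
      have hx0 : (fun i => R i k) ≠ 0 := by
        intro hx0
        have h1 := congrFun (congrFun hR k) k
        rw [Matrix.mul_apply] at h1
        simp only [Matrix.transpose_apply, Matrix.one_apply_eq] at h1
        have hz : ∀ j, R j k = 0 := fun j => congrFun hx0 j
        simp only [hz, mul_zero, Finset.sum_const_zero] at h1
        norm_num at h1
      have hpos := hB.dotProduct_mulVec_pos hx0
      have heq : (Rᵀ * B * R) k k = star (fun i => R i k) ⬝ᵥ B *ᵥ (fun i => R i k) := by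
        simp only [Matrix.mul_apply, Matrix.transpose_apply, dotProduct, Matrix.mulVec,
          Pi.star_apply, star_trivial, Finset.sum_mul, Finset.mul_sum]
        rw [Finset.sum_comm]
        apply Finset.sum_congr rfl
        intro i _
        apply Finset.sum_congr rfl
        intro j _
        ring
      rw [heq]
      exact hpos
    have htr : (Rᵀ * B * R).trace = ∑ k, (Rᵀ * B * R) k k := rfl
    rw [htr]
    exact Finset.sum_pos (fun k _ => hentry k) ⟨⟨0, hp0⟩, Finset.mem_univ _⟩
  have hHtr : ∀ R : Matrix (Fin d) (Fin p) ℝ, Rᵀ * R = 1 →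
      (Rᵀ * H * R).trace = (Rᵀ * A * R).trace - q Pstar * (Rᵀ * B * R).trace := by
    intro R hR
    have hsplit : Rᵀ * H * R = Rᵀ * A * R - q Pstar • (Rᵀ * B * R) := by
      rw [hH, Matrix.mul_sub, Matrix.sub_mul, Matrix.mul_smul, Matrix.smul_mul]
    rw [hsplit, Matrix.trace_sub, Matrix.trace_smul, smul_eq_mul]
  have hq0 : (Pstarᵀ * H * Pstar).trace = 0 := by
    have hBp := hBtr Pstar hPs
    rw [hHtr Pstar hPs]
    simp only [hq]
    rw [div_mul_cancel₀ _ (ne_of_gt hBp), sub_self]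
  have hmax0 : ∀ R : Matrix (Fin d) (Fin p) ℝ, Rᵀ * R = 1 → (Rᵀ * H * R).trace ≤ 0 := by
    intro R hR
    have h := hmax R hR
    have hBp := hBtr R hR
    rw [hHtr R hR]
    simp only [hq] at h ⊢
    have h2 := (div_le_iff₀ hBp).mp h
    linarith
  -- the coordinate-inclusion matrix E
  set E : Matrix (Fin d) (Fin p) ℝ := fun i k => if i = Fin.castLE hp k then 1 else 0 with hE
  have hEE : Eᵀ * E = 1 := by
    ext k l
    rw [Matrix.mul_apply]
    simp only [Matrix.transpose_apply]
    simp only [hE, ite_mul, one_mul, zero_mul]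
    rw [Finset.sum_ite_eq' Finset.univ (Fin.castLE hp k)
      (fun i => if i = Fin.castLE hp l then (1:ℝ) else 0), if_pos (Finset.mem_univ _)]
    simp [Matrix.one_apply, Fin.castLE_inj]
  have hEEt : E * Eᵀ = Matrix.diagonal (fun i : Fin d => if (i:ℕ) < p then (1:ℝ) else 0) := by
    ext i j
    rw [Matrix.mul_apply]
    simp only [Matrix.transpose_apply]
    simp only [hE, ite_mul, one_mul, zero_mul]
    by_cases hi : (i:ℕ) < p
    · simp only [cast_cond_iff hp i hi]
      rw [Finset.sum_ite_eq Finset.univ (⟨(i:ℕ), hi⟩ : Fin p)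
        (fun x => if j = Fin.castLE hp x then (1:ℝ) else 0), if_pos (Finset.mem_univ _)]
      have hic : Fin.castLE hp ⟨(i:ℕ), hi⟩ = i := Fin.ext rfl
      rw [hic, Matrix.diagonal_apply]
      by_cases hij : i = j
      · rw [if_pos hij.symm, if_pos hij, if_pos hi]
      · rw [if_neg (fun h : j = i => hij h.symm), if_neg hij]
    · have hz : ∑ k : Fin p, (if i = Fin.castLE hp k then
          (if j = Fin.castLE hp k then (1:ℝ) else 0) else 0) = 0 :=
        Finset.sum_eq_zero fun k _ => if_neg (fun h => hi (by rw [h]; exact k.2))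
      rw [hz, Matrix.diagonal_apply]
      by_cases hij : i = j
      · rw [if_pos hij, if_neg hi]
      · rw [if_neg hij]
  have hEDE2 : Eᵀ * D * E = Matrix.diagonal (fun k : Fin p => μ (Fin.castLE hp k)) := by
    ext k l
    rw [hD, Matrix.mul_apply]
    simp only [Matrix.mul_diagonal, Matrix.transpose_apply]
    simp only [hE, ite_mul, one_mul, zero_mul]
    rw [Finset.sum_ite_eq' Finset.univ (Fin.castLE hp k)
      (fun j => μ j * if j = Fin.castLE hp l then (1:ℝ) else 0), if_pos (Finset.mem_univ _)]
    rw [Matrix.diagonal_apply]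
    by_cases hkl : k = l
    · subst hkl; rw [if_pos rfl, if_pos rfl, mul_one]
    · rw [if_neg (fun h : Fin.castLE hp k = Fin.castLE hp l => hkl (Fin.castLE_inj.mp h)),
        mul_zero, if_neg hkl]
  have hEDpE : E * Matrix.diagonal (fun k : Fin p => μ (Fin.castLE hp k)) * Eᵀ
      = D * Matrix.diagonal (fun i : Fin d => if (i:ℕ) < p then (1:ℝ) else 0) := by
    ext i j
    rw [hD, Matrix.mul_apply, Matrix.diagonal_mul_diagonal]
    simp only [Matrix.mul_diagonal, Matrix.transpose_apply]
    simp only [hE, ite_mul, one_mul, zero_mul]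
    by_cases hi : (i:ℕ) < p
    · simp only [cast_cond_iff hp i hi]
      rw [Finset.sum_ite_eq Finset.univ (⟨(i:ℕ), hi⟩ : Fin p)
        (fun x => μ (Fin.castLE hp x) * if j = Fin.castLE hp x then (1:ℝ) else 0),
        if_pos (Finset.mem_univ _)]
      have hic : Fin.castLE hp ⟨(i:ℕ), hi⟩ = i := Fin.ext rfl
      rw [hic, Matrix.diagonal_apply]
      by_cases hij : i = j
      · rw [if_pos hij.symm, if_pos hij, if_pos hi, mul_one]
      · rw [if_neg (fun h : j = i => hij h.symm), if_neg hij, mul_zero]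
    · have hz : ∑ k : Fin p, (if i = Fin.castLE hp k then
          μ (Fin.castLE hp k) * (if j = Fin.castLE hp k then (1:ℝ) else 0) else 0) = 0 :=
        Finset.sum_eq_zero fun k _ => if_neg (fun h => hi (by rw [h]; exact k.2))
      rw [hz, Matrix.diagonal_apply]
      by_cases hij : i = j
      · rw [if_pos hij, if_neg hi, mul_zero]
      · rw [if_neg hij]
  have hVE1 : (V * E)ᵀ * (V * E) = 1 := by
    calc (V * E)ᵀ * (V * E) = Eᵀ * (Vᵀ * V) * E := by
          rw [Matrix.transpose_mul]
          simp only [Matrix.mul_assoc]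
      _ = Eᵀ * E := by rw [hV, Matrix.mul_one]
      _ = 1 := hEE
  have hVEH : (V * E)ᵀ * H * (V * E) = Eᵀ * D * E := by
    calc (V * E)ᵀ * H * (V * E) = Eᵀ * (Vᵀ * V) * D * ((Vᵀ * V) * E) := by
          rw [hdec, Matrix.transpose_mul]
          simp only [Matrix.mul_assoc]
      _ = Eᵀ * D * E := by rw [hV, Matrix.mul_one, Matrix.one_mul]
  have hEtr : ∑ k : Fin p, μ (Fin.castLE hp k) ≤ 0 := by
    have h := hmax0 (V * E) hVE1
    rw [hVEH, hEDE2, Matrix.trace_diagonal] at h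
    exact h
  -- the trace of PᵀHP in terms of Pi
  have hPHPm : Pstarᵀ * H * Pstar = Qᵀ * D * Q := by
    calc Pstarᵀ * H * Pstar = Pstarᵀ * (V * D * Vᵀ) * Pstar := by rw [hdec]
      _ = (Pstarᵀ * V) * D * (Vᵀ * Pstar) := by simp only [Matrix.mul_assoc]
      _ = Qᵀ * D * Q := by rw [← hQt, ← hQdef]
  have hPHPtr : (Pstarᵀ * H * Pstar).trace = ∑ i, μ i * Pi i i := by
    rw [hPHPm, Matrix.trace_mul_cycle, ← hPidef]
    have htr : (Pi * D).trace = ∑ i, (Pi * D) i i := rfl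
    rw [htr]
    apply Finset.sum_congr rfl
    intro i _
    rw [hD, Matrix.mul_diagonal, mul_comm]
  have hsum_s : ∑ i, Pi i i = (p:ℝ) := by
    have htr : Pi.trace = ∑ i, Pi i i := rfl
    rw [← htr]
    exact hPitr
  have hχsum : ∑ i : Fin d, (if (i:ℕ) < p then (1:ℝ) else 0) = (p:ℝ) := by
    rw [sum_ite_lt d p hp (fun _ => (1:ℝ))]
    simp
  have hμχ : ∑ i : Fin d, μ i * (if (i:ℕ) < p then (1:ℝ) else 0)
      = ∑ k : Fin p, μ (Fin.castLE hp k) := by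
    have hterm : ∀ i : Fin d, μ i * (if (i:ℕ) < p then (1:ℝ) else 0)
        = if (i:ℕ) < p then μ i else 0 := by
      intro i; split_ifs <;> ring
    simp only [hterm]
    exact sum_ite_lt d p hp μ
  -- the pivot eigenvalue
  set t : ℝ := μ (⟨p - 1, by omega⟩ : Fin d) with htdef
  have hts : ∀ i : Fin d, (i:ℕ) < p → t ≤ μ i := by
    intro i hi
    rw [htdef]
    exact hμ (Fin.le_def.mpr (by show (i:ℕ) ≤ p - 1; omega))
  have hts' : ∀ i : Fin d, p ≤ (i:ℕ) → μ i ≤ t := by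
    intro i hi
    rw [htdef]
    exact hμ (Fin.le_def.mpr (by show p - 1 ≤ (i:ℕ); omega))
  have hterm_le : ∀ i : Fin d,
      (μ i - t) * (Pi i i - (if (i:ℕ) < p then (1:ℝ) else 0)) ≤ 0 := by
    intro i
    by_cases hi : (i:ℕ) < p
    · rw [if_pos hi]
      exact mul_nonpos_iff.mpr (Or.inl ⟨by linarith [hts i hi], by linarith [hle1 i]⟩)
    · rw [if_neg hi]
      exact mul_nonpos_iff.mpr (Or.inr ⟨by linarith [hts' i (not_lt.mp hi)],
        by linarith [hnonneg i]⟩)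
  have hsum_terms : ∑ i, (μ i - t) * (Pi i i - (if (i:ℕ) < p then (1:ℝ) else 0))
      = (∑ i, μ i * Pi i i) - ∑ i, μ i * (if (i:ℕ) < p then (1:ℝ) else 0) := by
    have expand : ∀ i : Fin d, (μ i - t) * (Pi i i - (if (i:ℕ) < p then (1:ℝ) else 0))
        = ((μ i * Pi i i - μ i * (if (i:ℕ) < p then (1:ℝ) else 0)) - t * Pi i i)
          + t * (if (i:ℕ) < p then (1:ℝ) else 0) := by
      intro i; ring
    simp only [expand]
    rw [Finset.sum_add_distrib, Finset.sum_sub_distrib, Finset.sum_sub_distrib,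
      ← Finset.mul_sum, ← Finset.mul_sum, hsum_s, hχsum]
    ring
  have hmuPi0 : ∑ i, μ i * Pi i i = 0 := by
    rw [← hPHPtr]
    exact hq0
  have hμχ0 : ∑ i : Fin d, μ i * (if (i:ℕ) < p then (1:ℝ) else 0) = 0 := by
    have h3 : ∑ i, (μ i - t) * (Pi i i - (if (i:ℕ) < p then (1:ℝ) else 0)) ≤ 0 :=
      Finset.sum_nonpos fun i _ => hterm_le i
    rw [hsum_terms, hmuPi0] at h3
    have h4 : ∑ i : Fin d, μ i * (if (i:ℕ) < p then (1:ℝ) else 0) ≤ 0 := by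
      rw [hμχ]; exact hEtr
    linarith
  have hkey : ∀ i : Fin d, (μ i - t) * (Pi i i - (if (i:ℕ) < p then (1:ℝ) else 0)) = 0 := by
    have htot : ∑ i, (μ i - t) * (Pi i i - (if (i:ℕ) < p then (1:ℝ) else 0)) = 0 := by
      rw [hsum_terms, hmuPi0, hμχ0, sub_zero]
    intro i
    exact (Finset.sum_eq_zero_iff_of_nonpos (fun j _ => hterm_le j)).mp htot i
      (Finset.mem_univ i)
  have h1Pi : ∀ i : Fin d, (i:ℕ) < p → μ i ≠ t → ∀ j, Pi i j = if i = j then 1 else 0 := by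
    intro i hi hit
    apply hrow1
    have h := hkey i
    rcases mul_eq_zero.mp h with h' | h'
    · exact absurd (by linarith [h'] : μ i = t) hit
    · rw [if_pos hi] at h'
      linarith
  have h0Pi : ∀ i : Fin d, p ≤ (i:ℕ) → μ i ≠ t → ∀ j, Pi i j = 0 := by
    intro i hi hit
    apply hrow0
    have h := hkey i
    rcases mul_eq_zero.mp h with h' | h'
    · exact absurd (by linarith [h'] : μ i = t) hit
    · rw [if_neg (not_lt.mpr hi)] at h'
      linarith
  have hblock := block_zero d p t μ Pi hPisym h1Pi h0Pi
  obtain ⟨O, hO1, hO2, hO3⟩ := exists_O d p hp t μ Pi hPisym h1Pi h0Pi hPiidem hPitr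
  have hDPi : D * Pi = Pi * D := by
    ext i j
    rw [hD, Matrix.diagonal_mul, Matrix.mul_diagonal]
    by_cases h : μ i = μ j
    · rw [h]; ring
    · rw [hblock i j h]; ring
  refine ⟨Qᵀ * D * Q, ?_, ?_, ?_, ?_, ?_⟩
  · -- symmetry
    simp only [hD, Matrix.transpose_mul, Matrix.transpose_transpose,
      Matrix.diagonal_transpose, Matrix.mul_assoc]
  · -- invariance
    have hDQ : D * Q = Q * (Qᵀ * (D * Q)) := by
      have h1 : D * Q = D * Pi * Q := by rw [Matrix.mul_assoc, hPiQ]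
      have h2 : D * Pi * Q = Pi * D * Q := by rw [hDPi]
      have h3 : Pi * D * Q = Q * (Qᵀ * (D * Q)) := by
        rw [hPidef]
        simp only [Matrix.mul_assoc]
      exact h1.trans (h2.trans h3)
    calc H * Pstar = V * D * Vᵀ * Pstar := by rw [hdec]
      _ = V * (D * Q) := by rw [hQdef]; simp only [Matrix.mul_assoc]
      _ = V * (Q * (Qᵀ * (D * Q))) := by conv_lhs => rw [hDQ]
      _ = Pstar * (Qᵀ * (D * Q)) := by rw [← hPV]; simp only [Matrix.mul_assoc]
      _ = Pstar * (Qᵀ * D * Q) := by rw [Matrix.mul_assoc Qᵀ D Q]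
  · -- the orthogonal diagonalization
    refine ⟨Qᵀ * O * E, ?_, ?_⟩
    · have hOPiO : Oᵀ * Pi * O
          = Matrix.diagonal (fun i : Fin d => if (i:ℕ) < p then (1:ℝ) else 0) := by
        rw [← hO3]
        calc Oᵀ * (O * Matrix.diagonal (fun i : Fin d => if (i:ℕ) < p then (1:ℝ) else 0) * Oᵀ)
              * O
            = (Oᵀ * O) * Matrix.diagonal (fun i : Fin d => if (i:ℕ) < p then (1:ℝ) else 0)
              * (Oᵀ * O) := by simp only [Matrix.mul_assoc]
          _ = Matrix.diagonal (fun i : Fin d => if (i:ℕ) < p then (1:ℝ) else 0) := by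
              rw [hO1, Matrix.one_mul, Matrix.mul_one]
      calc (Qᵀ * O * E)ᵀ * (Qᵀ * O * E)
          = Eᵀ * (Oᵀ * ((Q * Qᵀ) * (O * E))) := by
            simp only [Matrix.transpose_mul, Matrix.transpose_transpose, Matrix.mul_assoc]
        _ = Eᵀ * (Oᵀ * Pi * O) * E := by rw [← hPidef]; simp only [Matrix.mul_assoc]
        _ = Eᵀ * (E * Eᵀ) * E := by rw [hOPiO, ← hEEt]
        _ = (Eᵀ * E) * (Eᵀ * E) := by simp only [Matrix.mul_assoc]
        _ = 1 := by rw [hEE, Matrix.one_mul]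
    · have hODO : O * (D * Matrix.diagonal (fun i : Fin d => if (i:ℕ) < p then (1:ℝ) else 0))
          * Oᵀ = D * Pi := by
        calc O * (D * Matrix.diagonal (fun i : Fin d => if (i:ℕ) < p then (1:ℝ) else 0)) * Oᵀ
            = (O * D) * Matrix.diagonal (fun i : Fin d => if (i:ℕ) < p then (1:ℝ) else 0)
              * Oᵀ := by simp only [Matrix.mul_assoc]
          _ = (D * O) * Matrix.diagonal (fun i : Fin d => if (i:ℕ) < p then (1:ℝ) else 0)
              * Oᵀ := by rw [← hD] at hO2; rw [hO2]
          _ = D * (O * Matrix.diagonal (fun i : Fin d => if (i:ℕ) < p then (1:ℝ) else 0)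
              * Oᵀ) := by simp only [Matrix.mul_assoc]
          _ = D * Pi := by rw [hO3]
      symm
      calc (Qᵀ * O * E) * Matrix.diagonal (fun k : Fin p => μ (Fin.castLE hp k))
            * (Qᵀ * O * E)ᵀ
          = Qᵀ * (O * (E * Matrix.diagonal (fun k : Fin p => μ (Fin.castLE hp k)) * Eᵀ)
            * Oᵀ) * Q := by
            simp only [Matrix.transpose_mul, Matrix.transpose_transpose, Matrix.mul_assoc]
        _ = Qᵀ * (O * (D * Matrix.diagonal (fun i : Fin d => if (i:ℕ) < p then (1:ℝ) else 0))
            * Oᵀ) * Q := by rw [hEDpE]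
        _ = Qᵀ * (D * Pi) * Q := by rw [hODO]
        _ = Qᵀ * D * (Pi * Q) := by simp only [Matrix.mul_assoc]
        _ = Qᵀ * D * Q := by rw [hPiQ]
  · -- trace zero
    rw [← hPHPm]
    exact hq0
  · -- trace equals sum of top eigenvalues
    rw [← hPHPm, hq0, ← hμχ, hμχ0]
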